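/- Let k0 > 0, f : ℝ³ → ℝ be integrable, and R_s, R_t ∈ SO(3). Assume: (a) there is no α ∈ ℝ such that ν_{R_s}(Q(α)·k) = ν_{R_t}(k) for all k ∈ B, and no α ∈ ℝ such that ν_{R_s}(S·Q(α)·k) = ν_{R_t}(k) for all k ∈ B; (b) there exists exactly one triple (φ, θ, ψ) ∈ [0,2π) × [0,π] × [0,2π) such that ν_{R_s}(γ^{φ,θ}(β)) = ν_{R_t}(γ^{π−ψ,θ}(−β)) for all β ∈ [−π/2, π/2] and ν_{R_s}(γ^{*,φ,θ}(β)) = ν_{R_t}(γ^{*,π−ψ,θ}(β)) for all β ∈ [−π/2, π/2]. Then R_sᵀR_t = Q³(φ)·Q²(θ)·Q³(ψ) for this unique triple. -/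

import Mathlib

noncomputable section
open Real Set MeasureTheory
open scoped RealInnerProductSpace

abbrev R3 : Type := EuclideanSpace ℝ (Fin 3)
abbrev R2 : Type := EuclideanSpace ℝ (Fin 2)
abbrev Mat3 : Type := Matrix (Fin 3) (Fin 3) ℝ

def SO3 (R : Mat3) : Prop := R.transpose * R = 1 ∧ R.det = 1

def e3 : R3 := WithLp.toLp 2 (![0, 0, 1] : Fin 3 → ℝ)

def act3 (R : Mat3) (x : R3) : R3 := WithLp.toLp 2 (R.mulVec x)

def cross3 (x y : R3) : R3 := WithLp.toLp 2 (crossProduct x y)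

def rotE3 (R : Mat3) : R3 := act3 R e3

def v1 (Rs Rt : Mat3) : R3 := ‖rotE3 Rs + rotE3 Rt‖⁻¹ • (rotE3 Rs + rotE3 Rt)

def v2 (Rs Rt : Mat3) : R3 :=
  ‖cross3 (rotE3 Rs) (rotE3 Rt)‖⁻¹ • cross3 (rotE3 Rs) (rotE3 Rt)

def v3 (Rs Rt : Mat3) : R3 := ‖rotE3 Rs - rotE3 Rt‖⁻¹ • (rotE3 Rs - rotE3 Rt)

def aRad (k0 : ℝ) (Rs Rt : Mat3) : ℝ := k0 / 2 * ‖rotE3 Rs + rotE3 Rt‖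

def sigmaArc (k0 : ℝ) (Rs Rt : Mat3) (β : ℝ) : R3 :=
  (aRad k0 Rs Rt * (Real.cos β - 1)) • v1 Rs Rt + (aRad k0 Rs Rt * Real.sin β) • v2 Rs Rt

def cST (Rs Rt : Mat3) : ℝ := ⟪rotE3 Rs, rotE3 Rt⟫

def Jset (Rs Rt : Mat3) : Set ℝ :=
  if cST Rs Rt ≤ 0 then Ioc (-π) π
  else Ioo (-(Real.arccos ((cST Rs Rt - 1) / (cST Rs Rt + 1))))
    (Real.arccos ((cST Rs Rt - 1) / (cST Rs Rt + 1)))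

def kappa (k0 : ℝ) (k : R2) : ℝ := Real.sqrt (k0 ^ 2 - ‖k‖ ^ 2)

def hmap (k0 : ℝ) (k : R2) : R3 := WithLp.toLp 2 (![k 0, k 1, kappa k0 k - k0] : Fin 3 → ℝ)

def ball2 (k0 : ℝ) : Set R2 := {k | ‖k‖ < k0}

def Hemi (k0 : ℝ) (R : Mat3) : Set R3 := (fun k => act3 R (hmap k0 k)) '' ball2 k0

def aStar (k0 : ℝ) (Rs Rt : Mat3) : ℝ := k0 / 2 * ‖rotE3 Rs - rotE3 Rt‖

def sigmaStar (k0 : ℝ) (Rs Rt : Mat3) (β : ℝ) : R3 :=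
  (aStar k0 Rs Rt * (Real.cos β - 1)) • v3 Rs Rt - (aStar k0 Rs Rt * Real.sin β) • v2 Rs Rt

def JstarSet (Rs Rt : Mat3) : Set ℝ :=
  if 0 ≤ cST Rs Rt then Ioc (-π) π
  else Ioo (-(Real.arccos ((cST Rs Rt + 1) / (cST Rs Rt - 1))))
    (Real.arccos ((cST Rs Rt + 1) / (cST Rs Rt - 1)))

def P2 (x : R3) : R2 := WithLp.toLp 2 (![x 0, x 1] : Fin 2 → ℝ)

def relAxis (Rs Rt : Mat3) : R3 := act3 (Rs.transpose * Rt) e3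

def w1 (Rs Rt : Mat3) : R2 := ‖P2 (relAxis Rs Rt)‖⁻¹ • P2 (relAxis Rs Rt)

def w2 (Rs Rt : Mat3) : R2 :=
  ‖P2 (cross3 e3 (relAxis Rs Rt))‖⁻¹ • P2 (cross3 e3 (relAxis Rs Rt))

def aTilde (k0 : ℝ) (Rs Rt : Mat3) : ℝ := k0 / 2 * ‖P2 (relAxis Rs Rt)‖

def gammaArc (k0 : ℝ) (Rs Rt : Mat3) (β : ℝ) : R2 :=
  (aTilde k0 Rs Rt * (Real.cos β - 1)) • w1 Rs Rt + (aRad k0 Rs Rt * Real.sin β) • w2 Rs Rt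

def Q2mat (α : ℝ) : Mat3 :=
  !![Real.cos α, 0, Real.sin α; 0, 1, 0; -Real.sin α, 0, Real.cos α]

def Q3mat (α : ℝ) : Mat3 :=
  !![Real.cos α, -Real.sin α, 0; Real.sin α, Real.cos α, 0; 0, 0, 1]

def gammaEuler (k0 φ θ β : ℝ) : R2 :=
  WithLp.toLp 2 ((k0 / 2 * Real.sin θ * (Real.cos β - 1)) • (![Real.cos φ, Real.sin φ] : Fin 2 → ℝ)
    + (k0 * Real.cos (θ / 2) * Real.sin β) • (![-Real.sin φ, Real.cos φ] : Fin 2 → ℝ))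

def gammaStar (k0 : ℝ) (Rs Rt : Mat3) (β : ℝ) : R2 :=
  (-(aTilde k0 Rs Rt * (Real.cos β - 1))) • w1 Rs Rt
    - (aStar k0 Rs Rt * Real.sin β) • w2 Rs Rt

def gammaStarEuler (k0 φ θ β : ℝ) : R2 :=
  WithLp.toLp 2 ((-(k0 / 2 * Real.sin θ * (Real.cos β - 1))) • (![Real.cos φ, Real.sin φ] : Fin 2 → ℝ)
    - (k0 * Real.sin (θ / 2) * Real.sin β) • (![-Real.sin φ, Real.cos φ] : Fin 2 → ℝ))

/-- The 3D Fourier transform `𝓕f(y) = (2π)^{−3/2} ∫ f(x) e^{−i⟨x,y⟩} dx`. -/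
def FT (f : R3 → ℝ) (y : R3) : ℂ :=
  ((2 * π : ℝ) ^ (-(3 : ℝ) / 2) : ℝ) *
    ∫ x : R3, (f x : ℂ) * Complex.exp (-Complex.I * (⟪x, y⟫ : ℝ))

/-- The scaled squared energy `ν_R(k) = |𝓕f(R·h(k))|²`. -/
def nu (k0 : ℝ) (f : R3 → ℝ) (R : Mat3) (k : R2) : ℝ :=
  ‖FT f (act3 R (hmap k0 k))‖ ^ 2

def rot2 (α : ℝ) : Matrix (Fin 2) (Fin 2) ℝ :=
  !![Real.cos α, -Real.sin α; Real.sin α, Real.cos α]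

def act2 (Q : Matrix (Fin 2) (Fin 2) ℝ) (k : R2) : R2 := WithLp.toLp 2 (Q.mulVec k)

def Smat : Matrix (Fin 2) (Fin 2) ℝ := !![1, 0; 0, -1]

/-- The matching property of Theorem 3.6: the triple `(φ, θ, ψ)` of Euler angles matches the
scaled squared energies along the elliptic arcs and their duals. -/
def matchProp (k0 : ℝ) (f : R3 → ℝ) (Rs Rt : Mat3) (p : ℝ × ℝ × ℝ) : Prop :=
  p.1 ∈ Ico 0 (2 * π) ∧ p.2.1 ∈ Icc 0 π ∧ p.2.2 ∈ Ico 0 (2 * π) ∧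
  (∀ β ∈ Icc (-(π / 2)) (π / 2),
    nu k0 f Rs (gammaEuler k0 p.1 p.2.1 β)
      = nu k0 f Rt (gammaEuler k0 (π - p.2.2) p.2.1 (-β))) ∧
  (∀ β ∈ Icc (-(π / 2)) (π / 2),
    nu k0 f Rs (gammaStarEuler k0 p.1 p.2.1 β)
      = nu k0 f Rt (gammaStarEuler k0 (π - p.2.2) p.2.1 β))

/-! ### Auxiliary lemmas -/

private lemma exists_angle (a b : ℝ) (h : a ^ 2 + b ^ 2 = 1) :
    ∃ α ∈ Ico 0 (2 * π), Real.cos α = a ∧ Real.sin α = b := by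
  set z : ℂ := ⟨a, b⟩ with hzdef
  have habs : ‖z‖ = 1 := by
    rw [Complex.norm_def, Complex.normSq_mk, show a * a + b * b = a ^ 2 + b ^ 2 by ring, h,
      Real.sqrt_one]
  have hz0 : z ≠ 0 := by
    intro h0; rw [h0] at habs; simp at habs
  have hcos : Real.cos z.arg = a := by
    rw [Complex.cos_arg hz0, habs, div_one]
  have hsin : Real.sin z.arg = b := by
    rw [Complex.sin_arg, habs, div_one]
  have h1 := Complex.neg_pi_lt_arg z
  have h2 := Complex.arg_le_pi z
  have hpi := Real.pi_pos
  rcases le_or_gt 0 z.arg with h0 | h0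
  · exact ⟨z.arg, ⟨h0, by linarith⟩, hcos, hsin⟩
  · refine ⟨z.arg + 2 * π, ⟨by linarith, by linarith⟩, ?_, ?_⟩
    · rw [Real.cos_add_two_pi]; exact hcos
    · rw [Real.sin_add_two_pi]; exact hsin

private lemma so3_mul {A B : Mat3} (hA : SO3 A) (hB : SO3 B) : SO3 (A * B) := by
  constructor
  · rw [Matrix.transpose_mul, Matrix.mul_assoc, ← Matrix.mul_assoc A.transpose, hA.1,
      Matrix.one_mul, hB.1]
  · rw [Matrix.det_mul, hA.2, hB.2, mul_one]

private lemma so3_transpose {A : Mat3} (hA : SO3 A) : SO3 A.transpose := by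
  refine ⟨?_, by rw [Matrix.det_transpose]; exact hA.2⟩
  rw [Matrix.transpose_transpose]
  exact mul_eq_one_comm.mp hA.1

private lemma so3_Q3 (α : ℝ) : SO3 (Q3mat α) := by
  constructor
  · have ht : (Q3mat α).transpose
        = !![Real.cos α, Real.sin α, 0; -Real.sin α, Real.cos α, 0; 0, 0, 1] := by
      ext i j
      fin_cases i <;> fin_cases j <;> simp [Q3mat, Matrix.transpose_apply]
    rw [ht]
    ext i j
    fin_cases i <;> fin_cases j <;>
      simp [Q3mat, Matrix.mul_apply, Fin.sum_univ_three, Matrix.one_apply] <;>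
      first
        | ring1
        | linear_combination Real.sin_sq_add_cos_sq α
  · rw [Matrix.det_fin_three]
    simp [Q3mat]
    first
      | ring1
      | linear_combination Real.sin_sq_add_cos_sq α
      | linear_combination -Real.sin_sq_add_cos_sq α

private lemma so3_Q2 (α : ℝ) : SO3 (Q2mat α) := by
  constructor
  · have ht : (Q2mat α).transpose
        = !![Real.cos α, 0, -Real.sin α; 0, 1, 0; Real.sin α, 0, Real.cos α] := by
      ext i j
      fin_cases i <;> fin_cases j <;> simp [Q2mat, Matrix.transpose_apply]
    rw [ht]
    ext i j
    fin_cases i <;> fin_cases j <;>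
      simp [Q2mat, Matrix.mul_apply, Fin.sum_univ_three, Matrix.one_apply] <;>
      first
        | ring1
        | linear_combination Real.sin_sq_add_cos_sq α
  · rw [Matrix.det_fin_three]
    simp [Q2mat]
    first
      | ring1
      | linear_combination Real.sin_sq_add_cos_sq α
      | linear_combination -Real.sin_sq_add_cos_sq α

private lemma fix_e3 {M : Mat3} (hM : SO3 M) (h3 : act3 M e3 = e3) :
    ∃ ψ ∈ Ico 0 (2 * π), M = Q3mat ψ := by
  have c02 : M 0 2 = 0 := by
    have := congrFun (congrArg WithLp.ofLp h3) 0
    simpa [act3, e3, Matrix.mulVec, dotProduct, Fin.sum_univ_three] using this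
  have c12 : M 1 2 = 0 := by
    have := congrFun (congrArg WithLp.ofLp h3) 1
    simpa [act3, e3, Matrix.mulVec, dotProduct, Fin.sum_univ_three] using this
  have c22 : M 2 2 = 1 := by
    have := congrFun (congrArg WithLp.ofLp h3) 2
    simpa [act3, e3, Matrix.mulVec, dotProduct, Fin.sum_univ_three] using this
  have c20 : M 2 0 = 0 := by
    have := congrFun (congrFun hM.1 2) 0
    simpa [Matrix.mul_apply, Fin.sum_univ_three, Matrix.one_apply, c02, c12, c22] using this
  have c21 : M 2 1 = 0 := by
    have := congrFun (congrFun hM.1 2) 1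
    simpa [Matrix.mul_apply, Fin.sum_univ_three, Matrix.one_apply, c02, c12, c22] using this
  have o00 : M 0 0 ^ 2 + M 1 0 ^ 2 = 1 := by
    have := congrFun (congrFun hM.1 0) 0
    simp [Matrix.mul_apply, Fin.sum_univ_three, Matrix.one_apply, c20] at this
    linear_combination this
  have o01 : M 0 0 * M 0 1 + M 1 0 * M 1 1 = 0 := by
    have := congrFun (congrFun hM.1 0) 1
    simpa [Matrix.mul_apply, Fin.sum_univ_three, Matrix.one_apply, c20, c21] using this
  have hd : M 0 0 * M 1 1 - M 0 1 * M 1 0 = 1 := by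
    have := hM.2
    rw [Matrix.det_fin_three] at this
    rw [c02, c12, c22, c20, c21] at this
    linear_combination this
  obtain ⟨α, hα, hcos, hsin⟩ := exists_angle (M 0 0) (M 1 0) o00
  have e11 : M 1 1 = M 0 0 := by
    linear_combination (-(M 1 1)) * o00 + (M 0 0) * hd + (M 1 0) * o01
  have e01 : M 0 1 = -(M 1 0) := by
    linear_combination (-(M 0 1)) * o00 + (M 0 0) * o01 + (-(M 1 0)) * hd
  refine ⟨α, hα, ?_⟩
  ext i j
  fin_cases i <;> fin_cases j <;>
    simp [Q3mat, hcos, hsin, c02, c12, c22, c20, c21, e11, e01]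

private lemma euler_exists {M : Mat3} (hM : SO3 M) :
    ∃ p : ℝ × ℝ × ℝ, p.1 ∈ Ico 0 (2 * π) ∧ p.2.1 ∈ Icc 0 π ∧ p.2.2 ∈ Ico 0 (2 * π) ∧
      M = Q3mat p.1 * Q2mat p.2.1 * Q3mat p.2.2 := by
  have hcol : M 0 2 ^ 2 + M 1 2 ^ 2 + M 2 2 ^ 2 = 1 := by
    have := congrFun (congrFun hM.1 2) 2
    simp [Matrix.mul_apply, Fin.sum_univ_three, Matrix.one_apply] at this
    linear_combination this
  set θ := Real.arccos (M 2 2) with hθdef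
  have hv2le : M 2 2 ≤ 1 := by nlinarith [sq_nonneg (M 0 2), sq_nonneg (M 1 2), sq_nonneg (M 2 2 - 1)]
  have hv2ge : -1 ≤ M 2 2 := by nlinarith [sq_nonneg (M 0 2), sq_nonneg (M 1 2), sq_nonneg (M 2 2 + 1)]
  have hct : Real.cos θ = M 2 2 := Real.cos_arccos hv2ge hv2le
  have hstnn : 0 ≤ Real.sin θ := Real.sin_nonneg_of_nonneg_of_le_pi (Real.arccos_nonneg _) (Real.arccos_le_pi _)
  have hstsq : Real.sin θ ^ 2 = M 0 2 ^ 2 + M 1 2 ^ 2 := by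
    have := Real.sin_sq_add_cos_sq θ
    rw [hct] at this
    linarith
  obtain ⟨φ₀, hφ₀, hfc, hfs⟩ : ∃ φ₀ ∈ Ico 0 (2 * π),
      Real.sin θ * Real.cos φ₀ = M 0 2 ∧ Real.sin θ * Real.sin φ₀ = M 1 2 := by
    rcases eq_or_lt_of_le hstnn with h0 | h0
    · have hv0 : M 0 2 = 0 := by nlinarith [sq_nonneg (M 0 2), sq_nonneg (M 1 2)]
      have hv1 : M 1 2 = 0 := by nlinarith [sq_nonneg (M 0 2), sq_nonneg (M 1 2)]
      refine ⟨0, ⟨le_rfl, by positivity⟩, ?_, ?_⟩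
      · rw [← h0, zero_mul, hv0]
      · rw [← h0, zero_mul, hv1]
    · obtain ⟨φ₀, hmem, hc, hs⟩ := exists_angle (M 0 2 / Real.sin θ) (M 1 2 / Real.sin θ)
        (by field_simp; linear_combination -hstsq)
      refine ⟨φ₀, hmem, ?_, ?_⟩
      · rw [hc]; field_simp
      · rw [hs]; field_simp
  set A := Q3mat φ₀ * Q2mat θ with hAdef
  have hA : SO3 A := so3_mul (so3_Q3 φ₀) (so3_Q2 θ)
  have hAe3 : act3 A e3 = act3 M e3 := by
    ext i
    fin_cases i
    · simp [hAdef, act3, e3, Matrix.mulVec, dotProduct, Fin.sum_univ_three,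
        Matrix.mul_apply, Q3mat, Q2mat]
      linear_combination hfc
    · simp [hAdef, act3, e3, Matrix.mulVec, dotProduct, Fin.sum_univ_three,
        Matrix.mul_apply, Q3mat, Q2mat]
      linear_combination hfs
    · simp [hAdef, act3, e3, Matrix.mulVec, dotProduct, Fin.sum_univ_three,
        Matrix.mul_apply, Q3mat, Q2mat]
      linear_combination hct
  set N := A.transpose * M with hNdef
  have hN : SO3 N := so3_mul (so3_transpose hA) hM
  have hNe3 : act3 N e3 = e3 := by
    show WithLp.toLp 2 ((A.transpose * M).mulVec e3.ofLp) = e3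
    rw [← Matrix.mulVec_mulVec]
    have : M.mulVec e3.ofLp = A.mulVec e3.ofLp := congrArg WithLp.ofLp hAe3.symm
    rw [this, Matrix.mulVec_mulVec, hA.1, Matrix.one_mulVec]
  obtain ⟨ψ₀, hψ₀, hNQ⟩ := fix_e3 hN hNe3
  refine ⟨(φ₀, θ, ψ₀), hφ₀, ⟨Real.arccos_nonneg _, Real.arccos_le_pi _⟩, hψ₀, ?_⟩
  have : A * N = M := by
    rw [hNdef, ← Matrix.mul_assoc, mul_eq_one_comm.mp hA.1, Matrix.one_mul]
  rw [← this, hNQ, hAdef]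

private lemma norm_sq_R2 (k : R2) : ‖k‖ ^ 2 = k 0 ^ 2 + k 1 ^ 2 := by
  rw [EuclideanSpace.norm_eq, Real.sq_sqrt (by positivity)]
  simp [Fin.sum_univ_two, Real.norm_eq_abs, sq_abs]

private lemma kappa_gammaEuler (k0 φ θ β : ℝ) (hk0 : 0 < k0) (hcb : 0 ≤ Real.cos β) :
    kappa k0 (gammaEuler k0 φ θ β)
      = k0 * (Real.cos (θ / 2) ^ 2 * Real.cos β + Real.sin (θ / 2) ^ 2) := by
  have hsin : Real.sin θ = 2 * Real.sin (θ / 2) * Real.cos (θ / 2) := by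
    rw [show θ = 2 * (θ / 2) by ring, Real.sin_two_mul]; ring_nf
  have h0 : gammaEuler k0 φ θ β 0 = k0 * Real.sin (θ / 2) * Real.cos (θ / 2) * (Real.cos β - 1) * Real.cos φ - k0 * Real.cos (θ / 2) * Real.sin β * Real.sin φ := by
    show (k0 / 2 * Real.sin θ * (Real.cos (β) - 1)) * Real.cos (φ) + (k0 * Real.cos (θ / 2) * Real.sin (β)) * (-Real.sin (φ)) = _
    simp only [hsin]; ring
  have h1 : gammaEuler k0 φ θ β 1 = k0 * Real.sin (θ / 2) * Real.cos (θ / 2) * (Real.cos β - 1) * Real.sin φ + k0 * Real.cos (θ / 2) * Real.sin β * Real.cos φ := by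
    show (k0 / 2 * Real.sin θ * (Real.cos (β) - 1)) * Real.sin (φ) + (k0 * Real.cos (θ / 2) * Real.sin (β)) * Real.cos (φ) = _
    simp only [hsin]; ring
  set cb := Real.cos β; set sb := Real.sin β; set cf := Real.cos φ; set sf := Real.sin φ
  set c := Real.cos (θ / 2); set s := Real.sin (θ / 2)
  have hb : cb ^ 2 + sb ^ 2 = 1 := by rw [add_comm]; exact Real.sin_sq_add_cos_sq β
  have hf : cf ^ 2 + sf ^ 2 = 1 := by rw [add_comm]; exact Real.sin_sq_add_cos_sq φ
  have hh : c ^ 2 + s ^ 2 = 1 := by rw [add_comm]; exact Real.sin_sq_add_cos_sq (θ / 2)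
  have key : k0 ^ 2 - ‖gammaEuler k0 φ θ β‖ ^ 2 = (k0 * (c ^ 2 * cb + s ^ 2)) ^ 2 := by
    rw [norm_sq_R2, h0, h1]
    linear_combination ((-1)*k0^2*c^4 + (-1)*k0^2*sf^2*c^2*s^2 + (-1)*k0^2*cf^2*c^2*s^2) * hb +
      ((-2)*k0^2*c^2*s^2 + (-1)*k0^2*sb^2*c^2 + k0^2*sb^2*c^2*s^2 + (2)*k0^2*cb*c^2*s^2) * hf +
      ((-1)*k0^2 + (-1)*k0^2*s^2 + (-1)*k0^2*c^2 + k0^2*sb^2*c^2) * hh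
  have hnn : 0 ≤ k0 * (c ^ 2 * cb + s ^ 2) := by
    have := mul_nonneg (sq_nonneg c) hcb
    nlinarith [sq_nonneg s]
  rw [kappa, key, Real.sqrt_sq hnn]

private lemma kappa_gammaStar (k0 φ θ β : ℝ) (hk0 : 0 < k0) (hcb : 0 ≤ Real.cos β) :
    kappa k0 (gammaStarEuler k0 φ θ β)
      = k0 * (Real.sin (θ / 2) ^ 2 * Real.cos β + Real.cos (θ / 2) ^ 2) := by
  have hsin : Real.sin θ = 2 * Real.sin (θ / 2) * Real.cos (θ / 2) := by
    rw [show θ = 2 * (θ / 2) by ring, Real.sin_two_mul]; ring_nf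
  have h0 : gammaStarEuler k0 φ θ β 0 = -(k0 * Real.sin (θ / 2) * Real.cos (θ / 2) * (Real.cos β - 1)) * Real.cos φ + k0 * Real.sin (θ / 2) * Real.sin β * Real.sin φ := by
    show (-(k0 / 2 * Real.sin θ * (Real.cos (β) - 1))) * Real.cos (φ) - (k0 * Real.sin (θ / 2) * Real.sin (β)) * (-Real.sin (φ)) = _
    simp only [hsin]; ring
  have h1 : gammaStarEuler k0 φ θ β 1 = -(k0 * Real.sin (θ / 2) * Real.cos (θ / 2) * (Real.cos β - 1)) * Real.sin φ - k0 * Real.sin (θ / 2) * Real.sin β * Real.cos φ := by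
    show (-(k0 / 2 * Real.sin θ * (Real.cos (β) - 1))) * Real.sin (φ) - (k0 * Real.sin (θ / 2) * Real.sin (β)) * Real.cos (φ) = _
    simp only [hsin]; ring
  set cb := Real.cos β; set sb := Real.sin β; set cf := Real.cos φ; set sf := Real.sin φ
  set c := Real.cos (θ / 2); set s := Real.sin (θ / 2)
  have hb : cb ^ 2 + sb ^ 2 = 1 := by rw [add_comm]; exact Real.sin_sq_add_cos_sq β
  have hf : cf ^ 2 + sf ^ 2 = 1 := by rw [add_comm]; exact Real.sin_sq_add_cos_sq φ
  have hh : c ^ 2 + s ^ 2 = 1 := by rw [add_comm]; exact Real.sin_sq_add_cos_sq (θ / 2)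
  have key : k0 ^ 2 - ‖gammaStarEuler k0 φ θ β‖ ^ 2 = (k0 * (s ^ 2 * cb + c ^ 2)) ^ 2 := by
    rw [norm_sq_R2, h0, h1]
    linear_combination ((-1)*k0^2*s^4 + (-1)*k0^2*sf^2*c^2*s^2 + (-1)*k0^2*cf^2*c^2*s^2) * hb +
      ((-2)*k0^2*c^2*s^2 + (-1)*k0^2*sb^2*s^2 + k0^2*sb^2*c^2*s^2 + (2)*k0^2*cb*c^2*s^2) * hf +
      ((-1)*k0^2 + (-1)*k0^2*s^2 + (-1)*k0^2*c^2 + k0^2*sb^2*s^2) * hh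
  have hnn : 0 ≤ k0 * (s ^ 2 * cb + c ^ 2) := by
    have := mul_nonneg (sq_nonneg s) hcb
    nlinarith [sq_nonneg c]
  rw [kappa, key, Real.sqrt_sq hnn]

private lemma hmap_arc (k0 φ θ ψ β : ℝ) (hk0 : 0 < k0) (hcb : 0 ≤ Real.cos β) :
    hmap k0 (gammaEuler k0 φ θ β)
      = act3 (Q3mat φ * Q2mat θ * Q3mat ψ) (hmap k0 (gammaEuler k0 (π - ψ) θ (-β))) := by
  have hκ1 := kappa_gammaEuler k0 φ θ β hk0 hcb
  have hκ2 := kappa_gammaEuler k0 (π - ψ) θ (-β) hk0 (by rwa [Real.cos_neg])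
  rw [Real.cos_neg] at hκ2
  have hsin : Real.sin θ = 2 * Real.sin (θ / 2) * Real.cos (θ / 2) := by
    rw [show θ = 2 * (θ / 2) by ring, Real.sin_two_mul]; ring_nf
  have hcosθ : Real.cos θ = 2 * Real.cos (θ / 2) ^ 2 - 1 := by
    have h := Real.cos_two_mul (θ / 2)
    rwa [show 2 * (θ / 2) = θ by ring] at h
  have hb : Real.cos β ^ 2 + Real.sin β ^ 2 = 1 := by
    rw [add_comm]; exact Real.sin_sq_add_cos_sq β
  have hf : Real.cos φ ^ 2 + Real.sin φ ^ 2 = 1 := by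
    rw [add_comm]; exact Real.sin_sq_add_cos_sq φ
  have hp : Real.cos ψ ^ 2 + Real.sin ψ ^ 2 = 1 := by
    rw [add_comm]; exact Real.sin_sq_add_cos_sq ψ
  have hh : Real.cos (θ / 2) ^ 2 + Real.sin (θ / 2) ^ 2 = 1 := by
    rw [add_comm]; exact Real.sin_sq_add_cos_sq (θ / 2)
  have g0 : gammaEuler k0 φ θ β 0 = k0 * Real.sin (θ / 2) * Real.cos (θ / 2) * (Real.cos β - 1) * Real.cos φ - k0 * Real.cos (θ / 2) * Real.sin β * Real.sin φ := by
    show (k0 / 2 * Real.sin θ * (Real.cos (β) - 1)) * Real.cos (φ) + (k0 * Real.cos (θ / 2) * Real.sin (β)) * (-Real.sin (φ)) = _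
    simp only [Real.cos_pi_sub, Real.sin_pi_sub, Real.cos_neg, Real.sin_neg, hsin]; ring
  have g1 : gammaEuler k0 φ θ β 1 = k0 * Real.sin (θ / 2) * Real.cos (θ / 2) * (Real.cos β - 1) * Real.sin φ + k0 * Real.cos (θ / 2) * Real.sin β * Real.cos φ := by
    show (k0 / 2 * Real.sin θ * (Real.cos (β) - 1)) * Real.sin (φ) + (k0 * Real.cos (θ / 2) * Real.sin (β)) * Real.cos (φ) = _
    simp only [Real.cos_pi_sub, Real.sin_pi_sub, Real.cos_neg, Real.sin_neg, hsin]; ring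
  have g0' : gammaEuler k0 (π - ψ) θ (-β) 0 = -(k0 * Real.sin (θ / 2) * Real.cos (θ / 2) * (Real.cos β - 1)) * Real.cos ψ + k0 * Real.cos (θ / 2) * Real.sin β * Real.sin ψ := by
    show (k0 / 2 * Real.sin θ * (Real.cos (-β) - 1)) * Real.cos (π - ψ) + (k0 * Real.cos (θ / 2) * Real.sin (-β)) * (-Real.sin (π - ψ)) = _
    simp only [Real.cos_pi_sub, Real.sin_pi_sub, Real.cos_neg, Real.sin_neg, hsin]; ring
  have g1' : gammaEuler k0 (π - ψ) θ (-β) 1 = k0 * Real.sin (θ / 2) * Real.cos (θ / 2) * (Real.cos β - 1) * Real.sin ψ + k0 * Real.cos (θ / 2) * Real.sin β * Real.cos ψ := by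
    show (k0 / 2 * Real.sin θ * (Real.cos (-β) - 1)) * Real.sin (π - ψ) + (k0 * Real.cos (θ / 2) * Real.sin (-β)) * Real.cos (π - ψ) = _
    simp only [Real.cos_pi_sub, Real.sin_pi_sub, Real.cos_neg, Real.sin_neg, hsin]; ring
  have comp0 : (hmap k0 (gammaEuler k0 φ θ β)) 0 = (act3 (Q3mat φ * Q2mat θ * Q3mat ψ) (hmap k0 (gammaEuler k0 (π - ψ) θ (-β)))) 0 := by
    simp only [hmap, act3, Matrix.mulVec, dotProduct, Fin.sum_univ_three,
      Matrix.mul_apply, Q3mat, Q2mat, Matrix.cons_val', Matrix.cons_val_zero,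
      Matrix.cons_val_one, Matrix.cons_val_two, Matrix.head_cons, Matrix.tail_cons,
      Matrix.head_fin_const, Matrix.empty_val', Matrix.cons_val_fin_one, Matrix.of_apply,
      Fin.isValue, PiLp.neg_apply, PiLp.toLp_apply, g0, g1, g0', g1', hκ1, hκ2, hsin, hcosθ]
    linear_combination (k0*Real.cos φ*Real.cos (θ / 2)*Real.sin (θ / 2) + (-2)*k0*Real.cos φ*Real.cos (θ / 2)^3*Real.sin (θ / 2) + k0*Real.sin β*Real.sin φ*Real.cos (θ / 2) + (-1)*k0*Real.cos β*Real.cos φ*Real.cos (θ / 2)*Real.sin (θ / 2) + (2)*k0*Real.cos β*Real.cos φ*Real.cos (θ / 2)^3*Real.sin (θ / 2)) * hp + ((-2)*k0*Real.cos φ*Real.cos (θ / 2)*Real.sin (θ / 2)) * hh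
  have comp1 : (hmap k0 (gammaEuler k0 φ θ β)) 1 = (act3 (Q3mat φ * Q2mat θ * Q3mat ψ) (hmap k0 (gammaEuler k0 (π - ψ) θ (-β)))) 1 := by
    simp only [hmap, act3, Matrix.mulVec, dotProduct, Fin.sum_univ_three,
      Matrix.mul_apply, Q3mat, Q2mat, Matrix.cons_val', Matrix.cons_val_zero,
      Matrix.cons_val_one, Matrix.cons_val_two, Matrix.head_cons, Matrix.tail_cons,
      Matrix.head_fin_const, Matrix.empty_val', Matrix.cons_val_fin_one, Matrix.of_apply,
      Fin.isValue, PiLp.neg_apply, PiLp.toLp_apply, g0, g1, g0', g1', hκ1, hκ2, hsin, hcosθ]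
    linear_combination (k0*Real.sin φ*Real.cos (θ / 2)*Real.sin (θ / 2) + (-2)*k0*Real.sin φ*Real.cos (θ / 2)^3*Real.sin (θ / 2) + (-1)*k0*Real.sin β*Real.cos φ*Real.cos (θ / 2) + (-1)*k0*Real.cos β*Real.sin φ*Real.cos (θ / 2)*Real.sin (θ / 2) + (2)*k0*Real.cos β*Real.sin φ*Real.cos (θ / 2)^3*Real.sin (θ / 2)) * hp + ((-2)*k0*Real.sin φ*Real.cos (θ / 2)*Real.sin (θ / 2)) * hh
  have comp2 : (hmap k0 (gammaEuler k0 φ θ β)) 2 = (act3 (Q3mat φ * Q2mat θ * Q3mat ψ) (hmap k0 (gammaEuler k0 (π - ψ) θ (-β)))) 2 := by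
    simp only [hmap, act3, Matrix.mulVec, dotProduct, Fin.sum_univ_three,
      Matrix.mul_apply, Q3mat, Q2mat, Matrix.cons_val', Matrix.cons_val_zero,
      Matrix.cons_val_one, Matrix.cons_val_two, Matrix.head_cons, Matrix.tail_cons,
      Matrix.head_fin_const, Matrix.empty_val', Matrix.cons_val_fin_one, Matrix.of_apply,
      Fin.isValue, PiLp.neg_apply, PiLp.toLp_apply, g0, g1, g0', g1', hκ1, hκ2, hsin, hcosθ]
    linear_combination ((2)*k0*Real.cos (θ / 2)^2*Real.sin (θ / 2)^2 + (-2)*k0*Real.cos β*Real.cos (θ / 2)^2*Real.sin (θ / 2)^2) * hp + ((2)*k0 + (-2)*k0*Real.cos β*Real.cos (θ / 2)^2) * hh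
  ext i
  fin_cases i
  · exact comp0
  · exact comp1
  · exact comp2

private lemma hmap_star (k0 φ θ ψ β : ℝ) (hk0 : 0 < k0) (hcb : 0 ≤ Real.cos β) :
    hmap k0 (gammaStarEuler k0 φ θ β)
      = -(act3 (Q3mat φ * Q2mat θ * Q3mat ψ) (hmap k0 (gammaStarEuler k0 (π - ψ) θ β))) := by
  have hκ1 := kappa_gammaStar k0 φ θ β hk0 hcb
  have hκ2 := kappa_gammaStar k0 (π - ψ) θ β hk0 hcb
  have hsin : Real.sin θ = 2 * Real.sin (θ / 2) * Real.cos (θ / 2) := by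
    rw [show θ = 2 * (θ / 2) by ring, Real.sin_two_mul]; ring_nf
  have hcosθ : Real.cos θ = 2 * Real.cos (θ / 2) ^ 2 - 1 := by
    have h := Real.cos_two_mul (θ / 2)
    rwa [show 2 * (θ / 2) = θ by ring] at h
  have hb : Real.cos β ^ 2 + Real.sin β ^ 2 = 1 := by
    rw [add_comm]; exact Real.sin_sq_add_cos_sq β
  have hf : Real.cos φ ^ 2 + Real.sin φ ^ 2 = 1 := by
    rw [add_comm]; exact Real.sin_sq_add_cos_sq φ
  have hp : Real.cos ψ ^ 2 + Real.sin ψ ^ 2 = 1 := by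
    rw [add_comm]; exact Real.sin_sq_add_cos_sq ψ
  have hh : Real.cos (θ / 2) ^ 2 + Real.sin (θ / 2) ^ 2 = 1 := by
    rw [add_comm]; exact Real.sin_sq_add_cos_sq (θ / 2)
  have g0 : gammaStarEuler k0 φ θ β 0 = -(k0 * Real.sin (θ / 2) * Real.cos (θ / 2) * (Real.cos β - 1)) * Real.cos φ + k0 * Real.sin (θ / 2) * Real.sin β * Real.sin φ := by
    show (-(k0 / 2 * Real.sin θ * (Real.cos (β) - 1))) * Real.cos (φ) - (k0 * Real.sin (θ / 2) * Real.sin (β)) * (-Real.sin (φ)) = _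
    simp only [Real.cos_pi_sub, Real.sin_pi_sub, Real.cos_neg, Real.sin_neg, hsin]; ring
  have g1 : gammaStarEuler k0 φ θ β 1 = -(k0 * Real.sin (θ / 2) * Real.cos (θ / 2) * (Real.cos β - 1)) * Real.sin φ - k0 * Real.sin (θ / 2) * Real.sin β * Real.cos φ := by
    show (-(k0 / 2 * Real.sin θ * (Real.cos (β) - 1))) * Real.sin (φ) - (k0 * Real.sin (θ / 2) * Real.sin (β)) * Real.cos (φ) = _
    simp only [Real.cos_pi_sub, Real.sin_pi_sub, Real.cos_neg, Real.sin_neg, hsin]; ring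
  have g0' : gammaStarEuler k0 (π - ψ) θ β 0 = k0 * Real.sin (θ / 2) * Real.cos (θ / 2) * (Real.cos β - 1) * Real.cos ψ + k0 * Real.sin (θ / 2) * Real.sin β * Real.sin ψ := by
    show (-(k0 / 2 * Real.sin θ * (Real.cos (β) - 1))) * Real.cos (π - ψ) - (k0 * Real.sin (θ / 2) * Real.sin (β)) * (-Real.sin (π - ψ)) = _
    simp only [Real.cos_pi_sub, Real.sin_pi_sub, Real.cos_neg, Real.sin_neg, hsin]; ring
  have g1' : gammaStarEuler k0 (π - ψ) θ β 1 = -(k0 * Real.sin (θ / 2) * Real.cos (θ / 2) * (Real.cos β - 1)) * Real.sin ψ + k0 * Real.sin (θ / 2) * Real.sin β * Real.cos ψ := by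
    show (-(k0 / 2 * Real.sin θ * (Real.cos (β) - 1))) * Real.sin (π - ψ) - (k0 * Real.sin (θ / 2) * Real.sin (β)) * Real.cos (π - ψ) = _
    simp only [Real.cos_pi_sub, Real.sin_pi_sub, Real.cos_neg, Real.sin_neg, hsin]; ring
  have comp0 : (hmap k0 (gammaStarEuler k0 φ θ β)) 0 = (-(act3 (Q3mat φ * Q2mat θ * Q3mat ψ) (hmap k0 (gammaStarEuler k0 (π - ψ) θ β)))) 0 := by
    simp only [hmap, act3, Matrix.mulVec, dotProduct, Fin.sum_univ_three,
      Matrix.mul_apply, Q3mat, Q2mat, Matrix.cons_val', Matrix.cons_val_zero,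
      Matrix.cons_val_one, Matrix.cons_val_two, Matrix.head_cons, Matrix.tail_cons,
      Matrix.head_fin_const, Matrix.empty_val', Matrix.cons_val_fin_one, Matrix.of_apply,
      Fin.isValue, PiLp.neg_apply, PiLp.toLp_apply, g0, g1, g0', g1', hκ1, hκ2, hsin, hcosθ]
    linear_combination (k0*Real.cos φ*Real.cos (θ / 2)*Real.sin (θ / 2) + (-2)*k0*Real.cos φ*Real.cos (θ / 2)^3*Real.sin (θ / 2) + (-1)*k0*Real.sin β*Real.sin φ*Real.sin (θ / 2) + (-1)*k0*Real.cos β*Real.cos φ*Real.cos (θ / 2)*Real.sin (θ / 2) + (2)*k0*Real.cos β*Real.cos φ*Real.cos (θ / 2)^3*Real.sin (θ / 2)) * hp + ((2)*k0*Real.cos β*Real.cos φ*Real.cos (θ / 2)*Real.sin (θ / 2)) * hh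
  have comp1 : (hmap k0 (gammaStarEuler k0 φ θ β)) 1 = (-(act3 (Q3mat φ * Q2mat θ * Q3mat ψ) (hmap k0 (gammaStarEuler k0 (π - ψ) θ β)))) 1 := by
    simp only [hmap, act3, Matrix.mulVec, dotProduct, Fin.sum_univ_three,
      Matrix.mul_apply, Q3mat, Q2mat, Matrix.cons_val', Matrix.cons_val_zero,
      Matrix.cons_val_one, Matrix.cons_val_two, Matrix.head_cons, Matrix.tail_cons,
      Matrix.head_fin_const, Matrix.empty_val', Matrix.cons_val_fin_one, Matrix.of_apply,
      Fin.isValue, PiLp.neg_apply, PiLp.toLp_apply, g0, g1, g0', g1', hκ1, hκ2, hsin, hcosθ]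
    linear_combination (k0*Real.sin φ*Real.cos (θ / 2)*Real.sin (θ / 2) + (-2)*k0*Real.sin φ*Real.cos (θ / 2)^3*Real.sin (θ / 2) + k0*Real.sin β*Real.cos φ*Real.sin (θ / 2) + (-1)*k0*Real.cos β*Real.sin φ*Real.cos (θ / 2)*Real.sin (θ / 2) + (2)*k0*Real.cos β*Real.sin φ*Real.cos (θ / 2)^3*Real.sin (θ / 2)) * hp + ((2)*k0*Real.cos β*Real.sin φ*Real.cos (θ / 2)*Real.sin (θ / 2)) * hh
  have comp2 : (hmap k0 (gammaStarEuler k0 φ θ β)) 2 = (-(act3 (Q3mat φ * Q2mat θ * Q3mat ψ) (hmap k0 (gammaStarEuler k0 (π - ψ) θ β)))) 2 := by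
    simp only [hmap, act3, Matrix.mulVec, dotProduct, Fin.sum_univ_three,
      Matrix.mul_apply, Q3mat, Q2mat, Matrix.cons_val', Matrix.cons_val_zero,
      Matrix.cons_val_one, Matrix.cons_val_two, Matrix.head_cons, Matrix.tail_cons,
      Matrix.head_fin_const, Matrix.empty_val', Matrix.cons_val_fin_one, Matrix.of_apply,
      Fin.isValue, PiLp.neg_apply, PiLp.toLp_apply, g0, g1, g0', g1', hκ1, hκ2, hsin, hcosθ]
    linear_combination ((2)*k0*Real.cos (θ / 2)^2*Real.sin (θ / 2)^2 + (-2)*k0*Real.cos β*Real.cos (θ / 2)^2*Real.sin (θ / 2)^2) * hp + ((2)*k0*Real.cos (θ / 2)^2) * hh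
  ext i
  fin_cases i
  · exact comp0
  · exact comp1
  · exact comp2

private lemma FT_neg (f : R3 → ℝ) (y : R3) :
    ‖FT f (-y)‖ = ‖FT f y‖ := by
  have key : FT f (-y) = (starRingEnd ℂ) (FT f y) := by
    rw [FT, FT, map_mul, ← integral_conj]
    congr 1
    · exact (Complex.conj_ofReal _).symm
    · congr 1
      funext x
      rw [map_mul, Complex.conj_ofReal, ← Complex.exp_conj]
      congr 2
      rw [map_mul, map_neg, Complex.conj_I, Complex.conj_ofReal, inner_neg_right]
      push_cast
      ring
  rw [key, Complex.norm_conj]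

private lemma act3_act3 {Rs Rt : Mat3} (hRs : SO3 Rs) (x : R3) :
    act3 Rs (act3 (Rs.transpose * Rt) x) = act3 Rt x := by
  show WithLp.toLp 2 (Rs.mulVec ((Rs.transpose * Rt).mulVec x.ofLp)) = WithLp.toLp 2 (Rt.mulVec x.ofLp)
  rw [Matrix.mulVec_mulVec, ← Matrix.mul_assoc, mul_eq_one_comm.mp hRs.1,
    Matrix.one_mul]

private lemma nu_arc_match (k0 : ℝ) (hk0 : 0 < k0) (f : R3 → ℝ) {Rs Rt : Mat3}
    (hRs : SO3 Rs) (φ θ ψ β : ℝ)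
    (hrel : Rs.transpose * Rt = Q3mat φ * Q2mat θ * Q3mat ψ) (hcb : 0 ≤ Real.cos β) :
    nu k0 f Rs (gammaEuler k0 φ θ β) = nu k0 f Rt (gammaEuler k0 (π - ψ) θ (-β)) := by
  unfold nu
  rw [hmap_arc k0 φ θ ψ β hk0 hcb, ← hrel, act3_act3 hRs]

private lemma nu_star_match (k0 : ℝ) (hk0 : 0 < k0) (f : R3 → ℝ) {Rs Rt : Mat3}
    (hRs : SO3 Rs) (φ θ ψ β : ℝ)
    (hrel : Rs.transpose * Rt = Q3mat φ * Q2mat θ * Q3mat ψ) (hcb : 0 ≤ Real.cos β) :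
    nu k0 f Rs (gammaStarEuler k0 φ θ β) = nu k0 f Rt (gammaStarEuler k0 (π - ψ) θ β) := by
  unfold nu
  rw [hmap_star k0 φ θ ψ β hk0 hcb, ← hrel]
  have hneg : act3 Rs (-(act3 (Rs.transpose * Rt) (hmap k0 (gammaStarEuler k0 (π - ψ) θ β))))
      = -(act3 Rt (hmap k0 (gammaStarEuler k0 (π - ψ) θ β))) := by
    have h1 : act3 Rs (-(act3 (Rs.transpose * Rt) (hmap k0 (gammaStarEuler k0 (π - ψ) θ β))))
        = -(act3 Rs (act3 (Rs.transpose * Rt) (hmap k0 (gammaStarEuler k0 (π - ψ) θ β)))) :=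
      congrArg (WithLp.toLp 2) (Matrix.mulVec_neg _ _)
    rw [h1, act3_act3 hRs]
  rw [hneg, FT_neg]

/-- Theorem: reconstruction of Euler angles.
Assume neither degenerate relation `ν_{Rs}(Q(α)·k) = ν_{Rt}(k)` nor
`ν_{Rs}(S·Q(α)·k) = ν_{Rt}(k)` holds for any `α`, and that there is exactly one triple
`(φ, θ, ψ) ∈ [0,2π) × [0,π] × [0,2π)` matching the data along the elliptic arcs and their
duals.  Then `Rsᵀ Rt = Q³(φ)·Q²(θ)·Q³(ψ)` for this unique triple. -/
theorem reconstruction_euler_angles (k0 : ℝ) (hk0 : 0 < k0) (f : R3 → ℝ)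
    (hf : MeasureTheory.Integrable f) (Rs Rt : Mat3) (hRs : SO3 Rs) (hRt : SO3 Rt)
    (hnotplus : ¬ ∃ α : ℝ, ∀ k ∈ ball2 k0, nu k0 f Rs (act2 (rot2 α) k) = nu k0 f Rt k)
    (hnotminus : ¬ ∃ α : ℝ, ∀ k ∈ ball2 k0, nu k0 f Rs (act2 (Smat * rot2 α) k) = nu k0 f Rt k)
    (hexu : ∃! p : ℝ × ℝ × ℝ, matchProp k0 f Rs Rt p)
    (φ θ ψ : ℝ) (hp : matchProp k0 f Rs Rt (φ, θ, ψ)) :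
    Rs.transpose * Rt = Q3mat φ * Q2mat θ * Q3mat ψ := by
  have hM : SO3 (Rs.transpose * Rt) := so3_mul (so3_transpose hRs) hRt
  obtain ⟨⟨φ₀, θ₀, ψ₀⟩, hφ₀, hθ₀, hψ₀, hMeq⟩ := euler_exists hM
  have hmatch : matchProp k0 f Rs Rt (φ₀, θ₀, ψ₀) := by
    refine ⟨hφ₀, hθ₀, hψ₀, ?_, ?_⟩
    · intro β hβ
      exact nu_arc_match k0 hk0 f hRs φ₀ θ₀ ψ₀ β hMeq (Real.cos_nonneg_of_mem_Icc hβ)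
    · intro β hβ
      exact nu_star_match k0 hk0 f hRs φ₀ θ₀ ψ₀ β hMeq (Real.cos_nonneg_of_mem_Icc hβ)
  obtain ⟨p, hp0, hup⟩ := hexu
  have h1 : (φ, θ, ψ) = p := hup _ hp
  have h2 : ((φ₀, θ₀, ψ₀) : ℝ × ℝ × ℝ) = p := hup _ hmatch
  have h3 : (φ, θ, ψ) = ((φ₀, θ₀, ψ₀) : ℝ × ℝ × ℝ) := h1.trans h2.symm
  obtain ⟨e1, e2, e3'⟩ : φ = φ₀ ∧ θ = θ₀ ∧ ψ = ψ₀ := by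
    simpa [Prod.ext_iff] using h3
  rw [e1, e2, e3', hMeq]
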